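/- arXiv:0911.0524 — 2 statements merged into one kernel-verified Lean document; each statement's English description precedes it below -/
import Mathlib

section
/- If u and v have cyclically conjugate cyclically irreducible forms (ρ(u) and ρ(v) are cyclic conjugates in Σ*), then u ≡_M v (u and v are left and right conjugates in M). -/
/-- `u` and `v` are cyclic conjugates in the free monoid `Σ*`. -/
def CycConj {α : Type*} (u v : List α) : Prop :=
  ∃ x y : List α, u = x ++ y ∧ v = y ++ x

/-- One rewriting step of the rewriting system `R`. -/
def Step {α : Type*} (R : List α → List α → Prop) (u v : List α) : Prop :=
  ∃ l r x y : List α, R l r ∧ u = x ++ l ++ y ∧ v = x ++ r ++ y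

/-- One cyclic reduction step: some cyclic conjugate of `u` rewrites to `v`. -/
def CycStep {α : Type*} (R : List α → List α → Prop) (u v : List α) : Prop :=
  ∃ w : List α, CycConj u w ∧ Step R w v

/-- `u` is cyclically irreducible: `u` and all its cyclic conjugates are irreducible. -/
def CycIrred {α : Type*} (R : List α → List α → Prop) (u : List α) : Prop :=
  ∀ w : List α, CycConj u w → ∀ v : List α, ¬ Step R w v

/-- Equality in the monoid presented by the rewriting system `R`. -/
def MEq {α : Type*} (R : List α → List α → Prop) : List α → List α → Prop :=
  Relation.EqvGen (Step R)

/-- `u ≡_M v` : `u` and `v` are left and right conjugates in the monoid presented by `R`. -/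
def MConj {α : Type*} (R : List α → List α → Prop) (u v : List α) : Prop :=
  ∃ x y : List α, MEq R (u ++ x) (x ++ v) ∧ MEq R (y ++ u) (v ++ y)

lemma step_append_left {α : Type*} {R : List α → List α → Prop} {a b : List α}
    (c : List α) (h : Step R a b) : Step R (c ++ a) (c ++ b) := by
  obtain ⟨l, r, x, y, hR, ha, hb⟩ := h
  exact ⟨l, r, c ++ x, y, hR, by simp [ha], by simp [hb]⟩

lemma step_append_right {α : Type*} {R : List α → List α → Prop} {a b : List α}
    (c : List α) (h : Step R a b) : Step R (a ++ c) (b ++ c) := by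
  obtain ⟨l, r, x, y, hR, ha, hb⟩ := h
  exact ⟨l, r, x, y ++ c, hR, by simp [ha], by simp [hb]⟩

lemma meq_append_left {α : Type*} {R : List α → List α → Prop} {a b : List α}
    (c : List α) (h : MEq R a b) : MEq R (c ++ a) (c ++ b) := by
  induction h with
  | rel _ _ h => exact Relation.EqvGen.rel _ _ (step_append_left c h)
  | refl _ => exact Relation.EqvGen.refl _
  | symm _ _ _ ih => exact Relation.EqvGen.symm _ _ ih
  | trans _ _ _ _ _ ih1 ih2 => exact Relation.EqvGen.trans _ _ _ ih1 ih2

lemma meq_append_right {α : Type*} {R : List α → List α → Prop} {a b : List α}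
    (c : List α) (h : MEq R a b) : MEq R (a ++ c) (b ++ c) := by
  induction h with
  | rel _ _ h => exact Relation.EqvGen.rel _ _ (step_append_right c h)
  | refl _ => exact Relation.EqvGen.refl _
  | symm _ _ _ ih => exact Relation.EqvGen.symm _ _ ih
  | trans _ _ _ _ _ ih1 ih2 => exact Relation.EqvGen.trans _ _ _ ih1 ih2

lemma meq_of_eq {α : Type*} {R : List α → List α → Prop} {a b : List α}
    (h : a = b) : MEq R a b := h ▸ Relation.EqvGen.refl a

lemma mconj_refl {α : Type*} (R : List α → List α → Prop) (a : List α) :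
    MConj R a a :=
  ⟨[], [], meq_of_eq (by simp), meq_of_eq (by simp)⟩

lemma mconj_symm {α : Type*} {R : List α → List α → Prop} {a b : List α}
    (h : MConj R a b) : MConj R b a := by
  obtain ⟨x, y, h1, h2⟩ := h
  exact ⟨y, x, Relation.EqvGen.symm _ _ h2, Relation.EqvGen.symm _ _ h1⟩

lemma mconj_trans {α : Type*} {R : List α → List α → Prop} {a b c : List α}
    (h1 : MConj R a b) (h2 : MConj R b c) : MConj R a c := by
  obtain ⟨x, y, hx, hy⟩ := h1
  obtain ⟨x', y', hx', hy'⟩ := h2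
  refine ⟨x ++ x', y' ++ y, ?_, ?_⟩
  · have t1 : MEq R (a ++ (x ++ x')) ((x ++ b) ++ x') := by
      have := meq_append_right x' hx
      simpa using this
    have t2 : MEq R ((x ++ b) ++ x') ((x ++ x') ++ c) := by
      have := meq_append_left x hx'
      simpa using this
    exact Relation.EqvGen.trans _ _ _ t1 t2
  · have t1 : MEq R ((y' ++ y) ++ a) (y' ++ (b ++ y)) := by
      have := meq_append_left y' hy
      simpa using this
    have t2 : MEq R (y' ++ (b ++ y)) (c ++ (y' ++ y)) := by
      have := meq_append_right y hy'
      simpa using this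
    exact Relation.EqvGen.trans _ _ _ t1 t2

lemma mconj_of_cycconj {α : Type*} (R : List α → List α → Prop) {a b : List α}
    (h : CycConj a b) : MConj R a b := by
  obtain ⟨x, y, ha, hb⟩ := h
  exact ⟨x, y, meq_of_eq (by simp [ha, hb]), meq_of_eq (by simp [ha, hb])⟩

lemma mconj_of_step {α : Type*} (R : List α → List α → Prop) {a b : List α}
    (h : Step R a b) : MConj R a b :=
  ⟨[], [], by simpa [MEq] using Relation.EqvGen.rel a b h,
    by simpa [MEq] using Relation.EqvGen.rel a b h⟩

lemma mconj_of_cycstep {α : Type*} (R : List α → List α → Prop) {a b : List α}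
    (h : CycStep R a b) : MConj R a b := by
  obtain ⟨w, hc, hs⟩ := h
  exact mconj_trans (mconj_of_cycconj R hc) (mconj_of_step R hs)

lemma mconj_of_cycred {α : Type*} (R : List α → List α → Prop) {a b : List α}
    (h : Relation.ReflTransGen (CycStep R) a b) : MConj R a b := by
  induction h with
  | refl => exact mconj_refl R a
  | tail _ hs ih => exact mconj_trans ih (mconj_of_cycstep R hs)

/-- if the cyclically irreducible forms of `u` and `v` are cyclic
conjugates in `Σ*`, then `u ≡_M v`. -/
theorem mconj_of_conj_forms {α : Type*} (R : List α → List α → Prop)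
    (u v ru rv : List α)
    (hru : Relation.ReflTransGen (CycStep R) u ru) (hiru : CycIrred R ru)
    (hrv : Relation.ReflTransGen (CycStep R) v rv) (hirv : CycIrred R rv)
    (hconj : CycConj ru rv) :
    MConj R u v :=
  mconj_trans (mconj_of_cycred R hru)
    (mconj_trans (mconj_of_cycconj R hconj)
      (mconj_symm (mconj_of_cycred R hrv)))
end

section
/- Let R be a complete rewriting system for M that is also cyclically complete. If u =_M v, then the cyclically irreducible forms of u and v are cyclic conjugates in Σ*. -/
lemma cycConj_refl {α : Type*} (u : List α) : CycConj u u :=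
  ⟨u, [], by simp, by simp⟩

lemma cycConj_symm {α : Type*} {u v : List α} (h : CycConj u v) : CycConj v u := by
  obtain ⟨x, y, hu, hv⟩ := h
  exact ⟨y, x, hv, hu⟩

lemma cycConj_iff_isRotated {α : Type*} {u v : List α} :
    CycConj u v ↔ u ~r v := by
  constructor
  · rintro ⟨x, y, rfl, rfl⟩
    exact (List.isRotated_append).symm.symm |>.symm
  · rintro ⟨n, rfl⟩
    rcases Nat.eq_zero_or_pos u.length with h | h
    · simp [List.length_eq_zero_iff.mp h, cycConj_refl]
    · refine ⟨u.take (n % u.length), u.drop (n % u.length), (List.take_append_drop _ _).symm, ?_⟩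
      rw [← List.rotate_mod]
      exact List.rotate_eq_drop_append_take (Nat.mod_lt _ h).le

lemma cycConj_trans {α : Type*} {u v w : List α} (h1 : CycConj u v) (h2 : CycConj v w) :
    CycConj u w :=
  cycConj_iff_isRotated.mpr ((cycConj_iff_isRotated.mp h1).trans (cycConj_iff_isRotated.mp h2))

/-- A word cyclically conjugate to a cyclically irreducible word is cyclically irreducible. -/
lemma cycIrred_of_conj {α : Type*} {R : List α → List α → Prop} {u v : List α}
    (h : CycIrred R u) (hc : CycConj u v) : CycIrred R v :=
  fun w hw x hx => h w (cycConj_trans hc hw) x hx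

/-- A cyclically irreducible word takes no cyclic step. -/
lemma no_cycStep {α : Type*} {R : List α → List α → Prop} {u v : List α}
    (h : CycIrred R u) (hs : CycStep R u v) : False := by
  obtain ⟨w, hw, hstep⟩ := hs
  exact h w hw v hstep

lemma rtg_eq_of_cycIrred {α : Type*} {R : List α → List α → Prop} {u v : List α}
    (h : CycIrred R u) (hs : Relation.ReflTransGen (CycStep R) u v) : u = v := by
  induction hs with
  | refl => rfl
  | tail hab hbc ih => exact absurd hbc (ih ▸ fun hs => no_cycStep h hs)

/-- for a complete and cyclically complete rewriting system,
words equal in `M` have cyclically conjugate cyclically irreducible forms. -/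
theorem conj_forms_of_meq {α : Type*} (R : List α → List α → Prop)
    (htermS : ¬ ∃ g : ℕ → List α, ∀ n : ℕ, Step R (g n) (g (n + 1)))
    (hconfS : ∀ w u v : List α, Relation.ReflTransGen (Step R) w u →
      Relation.ReflTransGen (Step R) w v →
      ∃ z : List α, Relation.ReflTransGen (Step R) u z ∧
        Relation.ReflTransGen (Step R) v z)
    (htermC : ¬ ∃ g : ℕ → List α, ∀ n : ℕ, CycStep R (g n) (g (n + 1)))
    (hconfC : ∀ w u v : List α, Relation.ReflTransGen (CycStep R) w u →
      Relation.ReflTransGen (CycStep R) w v →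
      ∃ z z' : List α, CycConj z z' ∧ Relation.ReflTransGen (CycStep R) u z ∧
        Relation.ReflTransGen (CycStep R) v z')
    (u v ru rv : List α) (huv : MEq R u v)
    (hru : Relation.ReflTransGen (CycStep R) u ru) (hiru : CycIrred R ru)
    (hrv : Relation.ReflTransGen (CycStep R) v rv) (hirv : CycIrred R rv) :
    CycConj ru rv := by
  -- Step implies CycStep
  have hSC : ∀ {a b : List α}, Step R a b → CycStep R a b :=
    fun {a b} h => ⟨a, cycConj_refl a, h⟩
  have hSC' : ∀ {a b : List α}, Relation.ReflTransGen (Step R) a b →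
      Relation.ReflTransGen (CycStep R) a b := by
    intro a b h
    induction h with
    | refl => exact Relation.ReflTransGen.refl
    | tail _ h2 ih => exact ih.tail (hSC h2)
  -- Join (ReflTransGen Step) is an equivalence, hence contains MEq
  have hequiv : Equivalence (Relation.Join (Relation.ReflTransGen (Step R))) :=
    Relation.equivalence_join
      (fun a b c h1 h2 => hconfS a b c h1 h2)
  have hjoin : Relation.Join (Relation.ReflTransGen (Step R)) u v := by
    clear hru hrv
    induction huv with
    | rel a b h => exact ⟨b, Relation.ReflTransGen.single h, Relation.ReflTransGen.refl⟩
    | refl a => exact hequiv.refl a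
    | symm a b _ ih => exact hequiv.symm ih
    | trans a b c _ _ ih1 ih2 => exact hequiv.trans ih1 ih2
  obtain ⟨z, huz, hvz⟩ := hjoin
  have huzC := hSC' huz
  have hvzC := hSC' hvz
  -- confluence of cyclic steps from u : ru and z
  obtain ⟨a, a', haa', hrua, hza'⟩ := hconfC u ru z hru huzC
  have h1 : ru = a := rtg_eq_of_cycIrred hiru hrua
  subst h1
  -- from v : rv and z
  obtain ⟨b, b', hbb', hrvb, hzb'⟩ := hconfC v rv z hrv hvzC
  have h2 : rv = b := rtg_eq_of_cycIrred hirv hrvb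
  subst h2
  -- from z : a' and b'
  obtain ⟨c, c', hcc', ha'c, hb'c'⟩ := hconfC z a' b' hza' hzb'
  have hia' : CycIrred R a' := cycIrred_of_conj hiru haa'
  have hib' : CycIrred R b' := cycIrred_of_conj hirv hbb'
  have h3 : a' = c := rtg_eq_of_cycIrred hia' ha'c
  have h4 : b' = c' := rtg_eq_of_cycIrred hib' hb'c'
  subst h3; subst h4
  exact cycConj_trans haa' (cycConj_trans hcc' (cycConj_symm hbb'))
end
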